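/- arXiv:2312.11438 — 2 statements merged into one kernel-verified Lean document; each statement's English description precedes it below -/
import Mathlib

section
/- Let f : ℝ → ℝ ∪ {+∞} be proper, convex, and lower semicontinuous with dom(f) ⊆ [0, ∞). If f is strictly decreasing on [0, b₀), then for every γ > 0 the derivative of the Moreau–Yosida regularization satisfies (ᵞf)'(θ) ≥ f'(θ) for almost every θ ∈ [0, b₀], where both derivatives exist almost everywhere. -/
open Filter Set Topology MeasureTheory

noncomputable section

/-- Convexity for extended-real-valued functions on `ℝ`. -/
def EConvex (f : ℝ → EReal) : Prop :=
  ∀ x y t : ℝ, 0 ≤ t → t ≤ 1 →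
    f (t * x + (1 - t) * y) ≤ (t : EReal) * f x + ((1 - t : ℝ) : EReal) * f y

/-- An extended-real-valued function is proper if it is not identically `+∞`
and never takes the value `−∞`. -/
def EProper (f : ℝ → EReal) : Prop := (∃ a, f a ≠ ⊤) ∧ ∀ a, f a ≠ ⊥

/-- Moreau–Yosida regularization with parameter `γ`:
`ᵞf(a) = inf_{b ≥ 0} ( f(b) + |a−b|² / (2γ) )`. -/
def moreau (γ : ℝ) (f : ℝ → EReal) (a : ℝ) : EReal :=
  ⨅ b : {b : ℝ // 0 ≤ b}, (f b.1 + (((a - b.1) ^ 2 / (2 * γ) : ℝ) : EReal))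

lemma econvex_comb {f : ℝ → EReal} (hconv : EConvex f) (hbot : ∀ a, f a ≠ ⊥)
    {x y t : ℝ} (ht0 : 0 ≤ t) (ht1 : t ≤ 1) (hx : f x ≠ ⊤) (hy : f y ≠ ⊤) :
    f (t * x + (1 - t) * y) ≠ ⊤ ∧
      (f (t * x + (1 - t) * y)).toReal ≤ t * (f x).toReal + (1 - t) * (f y).toReal := by
  have hx' : f x = ((f x).toReal : EReal) := (EReal.coe_toReal hx (hbot x)).symm
  have hy' : f y = ((f y).toReal : EReal) := (EReal.coe_toReal hy (hbot y)).symm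
  have h := hconv x y t ht0 ht1
  rw [hx', hy', ← EReal.coe_mul, ← EReal.coe_mul, ← EReal.coe_add] at h
  refine ⟨ne_top_of_le_ne_top (EReal.coe_ne_top _) h, ?_⟩
  have := EReal.toReal_le_toReal h (hbot _) (EReal.coe_ne_top _)
  simpa only [EReal.toReal_coe] using this

/-- If `f : ℝ → ℝ ∪ {+∞}` is proper, convex, lower semicontinuous, with
`dom f ⊆ [0, ∞)`, and strictly decreasing on `[0, b₀)`, then for every `γ > 0`,
almost everywhere on `[0, b₀]` both `f` and its Moreau–Yosida regularization `ᵞf`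
are differentiable and `(ᵞf)'(θ) ≥ f'(θ)`. -/
theorem statement1 (f : ℝ → EReal) (hproper : EProper f) (hconv : EConvex f)
    (hlsc : LowerSemicontinuous f) (hdom : ∀ a : ℝ, a < 0 → f a = ⊤)
    (b₀ : ℝ) (hb₀ : 0 < b₀)
    (hdec : ∀ x ∈ Set.Ico (0 : ℝ) b₀, ∀ y ∈ Set.Ico (0 : ℝ) b₀, x < y → f y < f x)
    (γ : ℝ) (hγ : 0 < γ) :
    ∀ᵐ θ ∂(volume : Measure ℝ), θ ∈ Set.Icc (0 : ℝ) b₀ →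
      DifferentiableAt ℝ (fun x => (f x).toReal) θ ∧
      DifferentiableAt ℝ (fun x => (moreau γ f x).toReal) θ ∧
      deriv (fun x => (f x).toReal) θ ≤ deriv (fun x => (moreau γ f x).toReal) θ := by
  obtain ⟨-, hbot⟩ := hproper
  set fr : ℝ → ℝ := fun x => (f x).toReal with hfr
  set gr : ℝ → ℝ := fun x => (moreau γ f x).toReal with hgr
  -- f is finite on (0, b₀)
  have hne_top : ∀ θ ∈ Set.Ioo (0:ℝ) b₀, f θ ≠ ⊤ := by
    intro θ hθ
    have h2 : (θ/2) ∈ Set.Ico (0:ℝ) b₀ := ⟨by linarith [hθ.1], by linarith [hθ.1, hθ.2]⟩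
    have hθ' : θ ∈ Set.Ico (0:ℝ) b₀ := ⟨le_of_lt hθ.1, hθ.2⟩
    exact ne_top_of_lt (hdec _ h2 _ hθ' (by linarith [hθ.1]))
  have hfeq : ∀ θ ∈ Set.Ioo (0:ℝ) b₀, f θ = ((fr θ : ℝ) : EReal) := fun θ hθ =>
    (EReal.coe_toReal (hne_top θ hθ) (hbot θ)).symm
  have hanti : ∀ x ∈ Set.Ico (0:ℝ) b₀, ∀ y ∈ Set.Ico (0:ℝ) b₀, x ≤ y → f y ≤ f x := by
    intro x hx y hy hxy
    rcases eq_or_lt_of_le hxy with rfl | h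
    · exact le_refl _
    · exact (hdec x hx y hy h).le
  -- moreau ≤ f on [0, ∞)
  have g_le_f : ∀ θ : ℝ, 0 ≤ θ → moreau γ f θ ≤ f θ := by
    intro θ hθ
    have h : moreau γ f θ ≤ f θ + (((θ - θ)^2/(2*γ) : ℝ) : EReal) :=
      iInf_le _ (⟨θ, hθ⟩ : {b : ℝ // 0 ≤ b})
    simpa using h
  have g_ne_top : ∀ θ ∈ Set.Ioo (0:ℝ) b₀, moreau γ f θ ≠ ⊤ := fun θ hθ =>
    ne_top_of_le_ne_top (hne_top θ hθ) (g_le_f θ hθ.1.le)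
  -- slope lower bound for f beyond x₂
  set x₁ : ℝ := b₀/3 with hx₁
  set x₂ : ℝ := b₀/2 with hx₂
  have hx₁I : x₁ ∈ Set.Ioo (0:ℝ) b₀ := ⟨by positivity, by linarith⟩
  have hx₂I : x₂ ∈ Set.Ioo (0:ℝ) b₀ := ⟨by positivity, by linarith⟩
  set m : ℝ := (fr x₂ - fr x₁)/(x₂ - x₁) with hm
  have hx12 : x₁ < x₂ := by rw [hx₁, hx₂]; linarith
  have hd2 : (0:ℝ) < x₂ - x₁ := by linarith
  have hslope : ∀ b : ℝ, x₂ < b → f b ≠ ⊤ → fr x₂ + m * (b - x₂) ≤ fr b := by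
    intro b hb htop
    have hd : (0:ℝ) < b - x₁ := by linarith
    set t : ℝ := (b - x₂)/(b - x₁) with ht
    have ht0 : 0 ≤ t := by apply div_nonneg <;> linarith
    have ht1 : t ≤ 1 := by rw [ht, div_le_one hd]; linarith
    have harg : t * x₁ + (1 - t) * b = x₂ := by rw [ht]; field_simp; try ring
    have hcomb := econvex_comb hconv hbot ht0 ht1 (hne_top x₁ hx₁I) htop
    rw [harg] at hcomb
    have h2 := hcomb.2
    have h3 := mul_le_mul_of_nonneg_right h2 hd.le
    have e : (t * (f x₁).toReal + (1 - t) * (f b).toReal) * (b - x₁)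
        = (b - x₂) * (f x₁).toReal + (x₂ - x₁) * (f b).toReal := by
      rw [ht]; field_simp; try ring
    rw [e] at h3
    have h6 : fr x₂ * (b - x₁) ≤ (b - x₂) * fr x₁ + (x₂ - x₁) * fr b := h3
    have h7 : (fr x₂ - fr x₁) * (b - x₂) ≤ (fr b - fr x₂) * (x₂ - x₁) := by nlinarith [h6]
    have h8 : (fr x₂ - fr x₁)/(x₂ - x₁) * (b - x₂) ≤ fr b - fr x₂ := by
      rw [div_mul_eq_mul_div, div_le_iff₀ hd2]; linarith
    rw [hm]; linarith
  -- moreau is never ⊥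
  have g_ne_bot : ∀ θ : ℝ, moreau γ f θ ≠ ⊥ := by
    intro θ
    set c : ℝ := min (fr x₂) (fr x₂ + m*(θ - x₂) - m^2*γ/2) with hc
    have hcle : (c : EReal) ≤ moreau γ f θ := by
      apply le_iInf
      rintro ⟨b, hb⟩
      by_cases htop : f b = ⊤
      · simp [htop]
      have hfb : f b = ((fr b : ℝ) : EReal) := (EReal.coe_toReal htop (hbot b)).symm
      rw [hfb, ← EReal.coe_add, EReal.coe_le_coe_iff]
      have hq : 0 ≤ (θ - b)^2/(2*γ) := by positivity
      rcases le_or_gt b x₂ with hbx | hbx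
      · have h1 : f x₂ ≤ f b := hanti b ⟨hb, lt_of_le_of_lt hbx hx₂I.2⟩ x₂ ⟨hx₂I.1.le, hx₂I.2⟩ hbx
        have h2 : fr x₂ ≤ fr b := by
          have := EReal.toReal_le_toReal h1 (hbot x₂) htop
          simpa using this
        have := min_le_left (fr x₂) (fr x₂ + m*(θ - x₂) - m^2*γ/2)
        linarith
      · have h2 := hslope b hbx htop
        have hq2 : m*(θ-b) - m^2*γ/2 ≤ (θ-b)^2/(2*γ) := by
          rw [le_div_iff₀ (by positivity : (0:ℝ) < 2*γ)]
          nlinarith [sq_nonneg (θ - b - m*γ)]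
        have := min_le_right (fr x₂) (fr x₂ + m*(θ - x₂) - m^2*γ/2)
        linarith
    intro hbotg
    rw [hbotg, le_bot_iff] at hcle
    exact (EReal.coe_ne_bot c) hcle
  have hgeq : ∀ θ ∈ Set.Ioo (0:ℝ) b₀, moreau γ f θ = ((gr θ : ℝ) : EReal) := fun θ hθ =>
    (EReal.coe_toReal (g_ne_top θ hθ) (g_ne_bot θ)).symm
  -- real form of moreau bound
  have hgle : ∀ θ : ℝ, ∀ b : ℝ, 0 ≤ b → f b ≠ ⊤ → gr θ ≤ fr b + (θ - b)^2/(2*γ) := by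
    intro θ b hb htop
    have h : moreau γ f θ ≤ f b + (((θ - b)^2/(2*γ) : ℝ) : EReal) :=
      iInf_le _ (⟨b, hb⟩ : {b : ℝ // 0 ≤ b})
    have hfb : f b = ((fr b : ℝ) : EReal) := (EReal.coe_toReal htop (hbot b)).symm
    rw [hfb, ← EReal.coe_add] at h
    have := EReal.toReal_le_toReal h (g_ne_bot θ) (EReal.coe_ne_top _)
    simpa only [EReal.toReal_coe] using this
  -- the difference gr - fr is monotone on (0, b₀)
  have hmono : MonotoneOn (fun x => gr x - fr x) (Set.Ioo (0:ℝ) b₀) := by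
    rintro θ₁ h1 θ₂ h2 h12
    rcases eq_or_lt_of_le h12 with rfl | hlt
    · exact le_refl _
    have key : ((gr θ₁ + fr θ₂ - fr θ₁ : ℝ) : EReal) ≤ moreau γ f θ₂ := by
      apply le_iInf
      rintro ⟨b₂, hb2⟩
      by_cases htop : f b₂ = ⊤
      · simp [htop]
      have hfb : f b₂ = ((fr b₂ : ℝ) : EReal) := (EReal.coe_toReal htop (hbot b₂)).symm
      rw [hfb, ← EReal.coe_add, EReal.coe_le_coe_iff]
      have hq : 0 ≤ (θ₂ - b₂)^2/(2*γ) := by positivity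
      have hg1 : gr θ₁ ≤ fr θ₁ := by
        have := hgle θ₁ θ₁ h1.1.le (hne_top θ₁ h1)
        simpa using this
      rcases lt_or_ge b₂ θ₂ with hblt | hbge
      · have hf2b : f θ₂ ≤ f b₂ :=
          (hdec b₂ ⟨hb2, hblt.trans h2.2⟩ θ₂ ⟨h2.1.le, h2.2⟩ hblt).le
        have h2b : fr θ₂ ≤ fr b₂ := by
          have := EReal.toReal_le_toReal hf2b (hbot θ₂) htop
          simpa using this
        linarith
      · set b₁ : ℝ := b₂ - θ₂ + θ₁ with hb₁
        have hb1nn : 0 ≤ b₁ := by rw [hb₁]; linarith [h1.1]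
        have hdd : (0:ℝ) < b₂ - θ₁ := by linarith
        set t : ℝ := (θ₂ - θ₁)/(b₂ - θ₁) with htdef
        have ht0 : 0 ≤ t := by apply div_nonneg <;> linarith
        have ht1 : t ≤ 1 := by rw [htdef, div_le_one hdd]; linarith
        have harg1 : t * θ₁ + (1 - t) * b₂ = b₁ := by rw [htdef, hb₁]; field_simp; ring
        have harg2 : (1 - t) * θ₁ + (1 - (1 - t)) * b₂ = θ₂ := by
          rw [htdef]; field_simp; ring
        have hcomb1 := econvex_comb hconv hbot ht0 ht1 (hne_top θ₁ h1) htop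
        rw [harg1] at hcomb1
        have hcomb2 := econvex_comb hconv hbot (by linarith : (0:ℝ) ≤ 1 - t)
          (by linarith : 1 - t ≤ 1) (hne_top θ₁ h1) htop
        rw [harg2] at hcomb2
        have hgb1 := hgle θ₁ b₁ hb1nn hcomb1.1
        have hsq : (θ₁ - b₁)^2 = (θ₂ - b₂)^2 := by rw [hb₁]; ring
        rw [hsq] at hgb1
        have hc1 : fr b₁ ≤ t * fr θ₁ + (1 - t) * fr b₂ := hcomb1.2
        have hc2 : fr θ₂ ≤ (1 - t) * fr θ₁ + (1 - (1 - t)) * fr b₂ := hcomb2.2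
        have hsum : fr b₁ + fr θ₂ ≤ fr θ₁ + fr b₂ := by linarith
        linarith
    have hkey2 : gr θ₁ + fr θ₂ - fr θ₁ ≤ gr θ₂ := by
      have h := EReal.toReal_le_toReal key (EReal.coe_ne_bot _) (g_ne_top θ₂ h2)
      rw [hgeq θ₂ h2, EReal.toReal_coe, EReal.toReal_coe] at h
      exact h
    simp only
    linarith
  -- fr is antitone on (0, b₀)
  have hfr_anti : AntitoneOn fr (Set.Ioo (0:ℝ) b₀) := by
    intro a ha b hbmem hab
    have h := hanti a ⟨ha.1.le, ha.2⟩ b ⟨hbmem.1.le, hbmem.2⟩ hab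
    exact EReal.toReal_le_toReal h (hbot b) (hne_top a ha)
  have hnegmono : MonotoneOn (fun x => -fr x) (Set.Ioo (0:ℝ) b₀) :=
    fun a ha b hb hab => neg_le_neg (hfr_anti ha hb hab)
  have A := hnegmono.ae_differentiableWithinAt_of_mem
  have B := hmono.ae_differentiableWithinAt_of_mem
  have C : ∀ᵐ θ ∂(volume : Measure ℝ), θ ∉ ({0, b₀} : Set ℝ) :=
    measure_eq_zero_iff_ae_notMem.mp (((Set.finite_singleton b₀).insert 0).countable.measure_zero _)
  filter_upwards [A, B, C] with θ hA hB hC hmem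
  have hIoo : θ ∈ Set.Ioo (0:ℝ) b₀ := by
    constructor
    · exact hmem.1.lt_of_ne' (fun h => hC (by simp [h]))
    · exact hmem.2.lt_of_ne (fun h => hC (by simp [h]))
  have hnhds : Set.Ioo (0:ℝ) b₀ ∈ 𝓝 θ := Ioo_mem_nhds hIoo.1 hIoo.2
  have hdF : DifferentiableAt ℝ fr θ := by
    have h := ((hA hIoo).differentiableAt hnhds).neg
    simpa using h
  have hdH : DifferentiableAt ℝ (fun x => gr x - fr x) θ :=
    (hB hIoo).differentiableAt hnhds
  have hGeq : gr = fun x => fr x + (gr x - fr x) := by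
    funext x; ring
  have hdG : DifferentiableAt ℝ gr θ := by
    rw [hGeq]; exact hdF.add hdH
  refine ⟨hdF, hdG, ?_⟩
  have hderivG : deriv gr θ = deriv fr θ + deriv (fun x => gr x - fr x) θ := by
    conv_lhs => rw [hGeq]
    exact deriv_add hdF hdH
  have hd := hdH.hasDerivAt
  have htend : Tendsto (slope (fun x => gr x - fr x) θ) (𝓝[>] θ)
      (𝓝 (deriv (fun x => gr x - fr x) θ)) :=
    (hasDerivAt_iff_tendsto_slope.1 hd).mono_left
      (nhdsWithin_mono _ fun x hx => ne_of_gt hx)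
  have hnn : 0 ≤ deriv (fun x => gr x - fr x) θ := by
    refine ge_of_tendsto htend ?_
    filter_upwards [Ioo_mem_nhdsGT_of_mem ⟨le_refl θ, hIoo.2⟩] with x hx
    have hxI : x ∈ Set.Ioo (0:ℝ) b₀ := ⟨hIoo.1.trans hx.1, hx.2⟩
    rw [slope_def_field]
    apply div_nonneg
    · have h := hmono hIoo hxI hx.1.le
      simp only at h
      linarith
    · linarith [hx.1]
  rw [hderivG]
  linarith
end
end

section
/- Let g : ℝ → ℝ ∪ {+∞} be proper, lower semicontinuous, and δ-convex for some δ > 0. Then its convex conjugate g* is proper, lower semicontinuous, convex, belongs to W^{2,∞}(ℝ), and its distributional second derivative satisfies 0 ≤ (g*)'' ≤ δ⁻¹. -/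
open Filter Set Topology Asymptotics

noncomputable section

/-- Legendre–Fenchel (convex) conjugate: `g*(b) = sup_a (a·b − g(a))`. -/
def econj (f : ℝ → EReal) (b : ℝ) : EReal := ⨆ a : ℝ, ((a * b : ℝ) : EReal) - f a

lemma ereal_cases (x : EReal) (hb : x ≠ ⊥) : x = ⊤ ∨ ∃ c : ℝ, x = (c : EReal) := by
  induction x using EReal.rec with
  | bot => simp at hb
  | coe c => exact Or.inr ⟨c, rfl⟩
  | top => exact Or.inl rfl

/-- Convexity inequality extracted at real values. -/
lemma econvex_real {h : ℝ → EReal} (hconv : EConvex h) {x y t hx' hy' hz' : ℝ}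
    (ht0 : 0 ≤ t) (ht1 : t ≤ 1) (ex : h x = (hx' : ℝ)) (ey : h y = (hy' : ℝ))
    (ez : h (t * x + (1 - t) * y) = (hz' : ℝ)) : hz' ≤ t * hx' + (1 - t) * hy' := by
  have hc := hconv x y t ht0 ht1
  rw [ex, ey, ez, ← EReal.coe_mul, ← EReal.coe_mul, ← EReal.coe_add] at hc
  exact_mod_cast hc

/-- A convex `EReal`-valued function, never `⊥`, finite at two points, is bounded below by a
cone function `cl - C * |a - m|`. -/
lemma twoPointBound {h : ℝ → EReal} (hconv : EConvex h) (hb : ∀ a, h a ≠ ⊥)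
    {p q hp hq : ℝ} (hpq : p < q) (ep : h p = (hp : ℝ)) (eq' : h q = (hq : ℝ)) :
    ∃ m cl C : ℝ, 0 ≤ C ∧ ∀ a r : ℝ, h a = (r : EReal) → cl - C * |a - m| ≤ r := by
  set m : ℝ := (p + q) / 2 with hm
  have hpm : p < m := by rw [hm]; linarith
  have hmq : m < q := by rw [hm]; linarith
  have hmid : (1/2 : ℝ) * p + (1 - 1/2) * q = m := by rw [hm]; ring
  have hm_le : h m ≤ (((hp + hq) / 2 : ℝ) : EReal) := by
    have hc := hconv p q (1/2) (by norm_num) (by norm_num)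
    rw [hmid, ep, eq', ← EReal.coe_mul, ← EReal.coe_mul, ← EReal.coe_add] at hc
    refine hc.trans ?_
    exact EReal.coe_le_coe_iff.2 (le_of_eq (by ring))
  obtain ⟨rm, erm⟩ : ∃ rm : ℝ, h m = (rm : EReal) :=
    (ereal_cases (h m) (hb m)).resolve_left
      (fun htop => absurd hm_le (by rw [htop]; simp))
  set σ : ℝ := (rm - hp) / (m - p) with hσ
  set τ : ℝ := (hq - rm) / (q - m) with hτ
  refine ⟨m, rm, max |σ| |τ|, le_trans (abs_nonneg σ) (le_max_left _ _), ?_⟩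
  intro a r ear
  rcases lt_trichotomy a m with ha | ha | ha
  · -- a < m : use points a < m < q
    have hqa : (0:ℝ) < q - a := by linarith
    have hqm : (0:ℝ) < q - m := by linarith
    have hma : (0:ℝ) < m - a := by linarith
    set t : ℝ := (q - m) / (q - a) with ht
    have ht0 : 0 ≤ t := le_of_lt (div_pos hqm hqa)
    have ht1 : t ≤ 1 := by rw [ht, div_le_one hqa]; linarith
    have hpt : t * a + (1 - t) * q = m := by
      rw [ht]; field_simp; ring
    have hr : rm ≤ t * r + (1 - t) * hq :=
      econvex_real hconv ht0 ht1 ear eq' (by rw [hpt]; exact erm)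
    have e1 : t * (q - a) = q - m := by rw [ht]; field_simp
    have e2 : (1 - t) * (q - a) = m - a := by rw [ht]; field_simp; ring
    have key : rm * (q - a) ≤ r * (q - m) + hq * (m - a) := by
      calc rm * (q - a) ≤ (t * r + (1 - t) * hq) * (q - a) :=
            mul_le_mul_of_nonneg_right hr (le_of_lt hqa)
        _ = r * (t * (q - a)) + hq * ((1 - t) * (q - a)) := by ring
        _ = r * (q - m) + hq * (m - a) := by rw [e1, e2]
    have hτ' : rm - r ≤ τ * (m - a) := by
      rw [hτ, div_mul_eq_mul_div, le_div_iff₀ hqm]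
      nlinarith [key]
    have habs : |a - m| = m - a := by rw [abs_of_neg (by linarith : a - m < 0)]; ring
    have hCa : τ * (m - a) ≤ max |σ| |τ| * (m - a) :=
      mul_le_mul_of_nonneg_right (le_trans (le_abs_self τ) (le_max_right _ _)) (le_of_lt hma)
    rw [habs]; linarith
  · -- a = m
    have hrr : rm = r := by rw [ha, erm] at ear; exact_mod_cast ear
    rw [ha, sub_self, abs_zero, mul_zero, sub_zero, hrr]
  · -- m < a : use points p < m < a
    have hap : (0:ℝ) < a - p := by linarith
    have hmp : (0:ℝ) < m - p := by linarith
    have ham : (0:ℝ) < a - m := by linarith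
    set t : ℝ := (a - m) / (a - p) with ht
    have ht0 : 0 ≤ t := le_of_lt (div_pos ham hap)
    have ht1 : t ≤ 1 := by rw [ht, div_le_one hap]; linarith
    have hpt : t * p + (1 - t) * a = m := by
      rw [ht]; field_simp; ring
    have hr : rm ≤ t * hp + (1 - t) * r :=
      econvex_real hconv ht0 ht1 ep ear (by rw [hpt]; exact erm)
    have e1 : t * (a - p) = a - m := by rw [ht]; field_simp
    have e2 : (1 - t) * (a - p) = m - p := by rw [ht]; field_simp; ring
    have key : rm * (a - p) ≤ hp * (a - m) + r * (m - p) := by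
      calc rm * (a - p) ≤ (t * hp + (1 - t) * r) * (a - p) :=
            mul_le_mul_of_nonneg_right hr (le_of_lt hap)
        _ = hp * (t * (a - p)) + r * ((1 - t) * (a - p)) := by ring
        _ = hp * (a - m) + r * (m - p) := by rw [e1, e2]
    have hσ' : rm - r ≤ -σ * (a - m) := by
      rw [hσ, show -((rm - hp) / (m - p)) * (a - m) = ((hp - rm) * (a - m)) / (m - p) by ring,
        le_div_iff₀ hmp]
      nlinarith [key]
    have habs : |a - m| = a - m := abs_of_pos (by linarith)
    have hCa : -σ * (a - m) ≤ max |σ| |τ| * (a - m) := by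
      refine mul_le_mul_of_nonneg_right ?_ (le_of_lt ham)
      exact le_trans (neg_le_abs σ) (le_max_left _ _)
    rw [habs]; linarith

lemma exists_deriv_lipschitz (f : ℝ → ℝ) (δ : ℝ) (hδ : 0 < δ)
    (hcvx : ConvexOn ℝ Set.univ f)
    (hccv : ConvexOn ℝ Set.univ (fun b => δ⁻¹ / 2 * b ^ 2 - f b)) :
    ∃ D : ℝ → ℝ, (∀ x, HasDerivAt f (D x) x) ∧
      LipschitzWith (Real.toNNReal δ⁻¹) D := by
  have hδi : (0:ℝ) < δ⁻¹ := inv_pos.2 hδ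
  set S : ℝ → ℝ → ℝ := fun x y => (f y - f x) / (y - x) with hS
  have sflip : ∀ x y : ℝ, (f x - f y) / (x - y) = S x y := by
    intro x y
    have : f x - f y = -(f y - f x) := by ring
    rw [hS, this, show x - y = -(y - x) by ring, neg_div_neg_eq]
  have fact1 : ∀ x y z : ℝ, y < x → x < z → S x y ≤ S x z := by
    intro x y z hyx hxz
    have h := hcvx.2 (Set.mem_univ y) (Set.mem_univ z)
    have := hcvx.slope_mono_adjacent (Set.mem_univ y) (Set.mem_univ z) hyx hxz
    rw [sflip] at this
    exact this
  have fact2 : ∀ x y z : ℝ, y < x → x < z → S x z ≤ S x y + δ⁻¹/2 * (z - y) := by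
    intro x y z hyx hxz
    have hthis := hccv.slope_mono_adjacent (Set.mem_univ y) (Set.mem_univ z) hyx hxz
    have hxy : x - y ≠ 0 := by linarith
    have hzx : z - x ≠ 0 := by linarith
    have e1 : (δ⁻¹ / 2 * x ^ 2 - f x - (δ⁻¹ / 2 * y ^ 2 - f y)) / (x - y)
        = δ⁻¹/2*(x+y) - (f x - f y)/(x - y) := by
      field_simp
      ring
    have e2 : (δ⁻¹ / 2 * z ^ 2 - f z - (δ⁻¹ / 2 * x ^ 2 - f x)) / (z - x)
        = δ⁻¹/2*(z+x) - (f z - f x)/(z - x) := by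
      field_simp
      ring
    rw [e1, e2, sflip] at hthis
    have : (f z - f x)/(z - x) = S x z := rfl
    rw [this] at hthis
    linarith
  have hne : ∀ x : ℝ, ((fun z => S x z) '' Ioi x).Nonempty :=
    fun x => ⟨S x (x+1), ⟨x+1, by simp, rfl⟩⟩
  have hbdd : ∀ x : ℝ, BddBelow ((fun z => S x z) '' Ioi x) := by
    intro x
    refine ⟨S x (x-1), ?_⟩
    rintro s ⟨z, hz, rfl⟩
    exact fact1 x (x-1) z (by linarith) hz
  set D : ℝ → ℝ := fun x => sInf ((fun z => S x z) '' Ioi x) with hD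
  have hDle : ∀ x z : ℝ, x < z → D x ≤ S x z :=
    fun x z hz => csInf_le (hbdd x) ⟨z, hz, rfl⟩
  have hleD : ∀ x y : ℝ, y < x → S x y ≤ D x := by
    intro x y hy
    refine le_csInf (hne x) ?_
    rintro s ⟨z, hz, rfl⟩
    exact fact1 x y z hy hz
  have hupper : ∀ x z : ℝ, x < z → S x z ≤ D x + δ⁻¹/2 * (z - x) := by
    intro x z hz
    refine le_of_forall_pos_le_add fun ε hε => ?_
    have hy : x - 2*δ*ε < x := by nlinarith
    have h1 := fact2 x (x - 2*δ*ε) z hy hz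
    have h2 := hleD x (x - 2*δ*ε) hy
    have h3 : δ⁻¹/2*(z - (x - 2*δ*ε)) = δ⁻¹/2*(z - x) + ε := by
      field_simp
      ring
    linarith
  have hlower : ∀ x y : ℝ, y < x → D x - δ⁻¹/2 * (x - y) ≤ S x y := by
    intro x y hy
    have key : ∀ ε : ℝ, 0 < ε → D x - δ⁻¹/2 * (x - y) ≤ S x y + ε := by
      intro ε hε
      have hz : x < x + 2*δ*ε := by nlinarith
      have h1 := fact2 x y (x + 2*δ*ε) hy hz
      have h2 := hDle x (x + 2*δ*ε) hz
      have h3 : δ⁻¹/2*(x + 2*δ*ε - y) = δ⁻¹/2*(x - y) + ε := by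
        field_simp
        ring
      linarith
    exact le_of_forall_pos_le_add key
  have est : ∀ x y : ℝ, |f y - f x - D x * (y - x)| ≤ δ⁻¹/2 * (y - x)^2 := by
    intro x y
    rcases lt_trichotomy y x with h | h | h
    · have hne' : y - x ≠ 0 := by linarith
      have hfy : f y - f x - D x * (y - x) = (S x y - D x) * (y - x) := by
        have hS' : S x y * (y - x) = f y - f x := by rw [hS]; exact div_mul_cancel₀ _ hne'
        linear_combination -hS'
      have h1 : |S x y - D x| ≤ δ⁻¹/2 * |y - x| := by
        have := hleD x y h
        have := hlower x y h
        rw [abs_of_neg (by linarith : y - x < 0)]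
        rw [abs_le]
        constructor <;> linarith
      rw [hfy, abs_mul]
      calc |S x y - D x| * |y - x| ≤ (δ⁻¹/2 * |y - x|) * |y - x| :=
            mul_le_mul_of_nonneg_right h1 (abs_nonneg _)
        _ = δ⁻¹/2 * (y - x)^2 := by rw [mul_assoc, abs_mul_abs_self, sq]
    · simp [h]
    · have hne' : y - x ≠ 0 := by linarith
      have hfy : f y - f x - D x * (y - x) = (S x y - D x) * (y - x) := by
        have hS' : S x y * (y - x) = f y - f x := by rw [hS]; exact div_mul_cancel₀ _ hne'
        linear_combination -hS'
      have h1 : |S x y - D x| ≤ δ⁻¹/2 * |y - x| := by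
        have := hDle x y h
        have := hupper x y h
        rw [abs_of_pos (by linarith : (0:ℝ) < y - x)]
        rw [abs_le]
        constructor <;> linarith
      rw [hfy, abs_mul]
      calc |S x y - D x| * |y - x| ≤ (δ⁻¹/2 * |y - x|) * |y - x| :=
            mul_le_mul_of_nonneg_right h1 (abs_nonneg _)
        _ = δ⁻¹/2 * (y - x)^2 := by rw [mul_assoc, abs_mul_abs_self, sq]
  refine ⟨D, ?_, ?_⟩
  · intro x
    rw [hasDerivAt_iff_isLittleO]
    have h1 : (fun y => f y - f x - (y - x) • D x) =O[𝓝 x] (fun y => (y - x)^2) := by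
      refine IsBigO.of_bound (δ⁻¹/2) (Filter.Eventually.of_forall fun y => ?_)
      rw [Real.norm_eq_abs, Real.norm_eq_abs, abs_of_nonneg (sq_nonneg (y - x)), smul_eq_mul]
      calc |f y - f x - (y - x) * D x| = |f y - f x - D x * (y - x)| := by ring_nf
        _ ≤ δ⁻¹/2 * (y - x)^2 := est x y
    have h0 : (fun y : ℝ => y - x) =o[𝓝 x] (fun _ => (1:ℝ)) := by
      rw [isLittleO_one_iff]
      have : Tendsto (fun y : ℝ => y - x) (𝓝 x) (𝓝 (x - x)) :=
        (continuous_id.sub continuous_const).tendsto x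
      simpa using this
    have h2 : (fun y : ℝ => (y - x)^2) =o[𝓝 x] (fun y => y - x) := by
      have := (isBigO_refl (fun y : ℝ => y - x) (𝓝 x)).mul_isLittleO h0
      simpa [sq] using this
    exact h1.trans_isLittleO h2
  · refine LipschitzWith.of_dist_le_mul fun x y => ?_
    rw [Real.dist_eq, Real.dist_eq, Real.coe_toNNReal _ (le_of_lt hδi)]
    rcases eq_or_ne x y with rfl | hxy
    · simp
    · have e1 := est x y
      have e2 := est y x
      have key : |(D y - D x) * (y - x)| ≤ δ⁻¹ * (y - x)^2 := by
        have : (D y - D x) * (y - x)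
            = (f y - f x - D x * (y - x)) + (f x - f y - D y * (x - y)) := by ring
        rw [this]
        calc |(f y - f x - D x * (y - x)) + (f x - f y - D y * (x - y))|
            ≤ |f y - f x - D x * (y - x)| + |f x - f y - D y * (x - y)| := abs_add_le _ _
          _ ≤ δ⁻¹/2 * (y - x)^2 + δ⁻¹/2 * (x - y)^2 := add_le_add e1 e2
          _ = δ⁻¹ * (y - x)^2 := by ring
      rw [abs_mul] at key
      have hpos : 0 < |y - x| := by
        rw [abs_pos]
        intro hc
        exact hxy (by linarith [sub_eq_zero.mp hc])
      have h2 : (y - x)^2 = |y - x| * |y - x| := by rw [abs_mul_abs_self]; ring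
      rw [h2, ← mul_assoc] at key
      have := le_of_mul_le_mul_right key hpos
      calc |D x - D y| = |D y - D x| := abs_sub_comm _ _
        _ ≤ δ⁻¹ * |y - x| := this
        _ = δ⁻¹ * |x - y| := by rw [abs_sub_comm]

/-- Let `g` be proper, lower semicontinuous, and `δ`-convex for some `δ > 0`.
Then `g*` is proper, lower semicontinuous, convex, finite everywhere, and lies in
`W^{2,∞}(ℝ)` with `0 ≤ (g*)'' ≤ δ⁻¹` (encoded as: `g*` is real-valued everywhere,
differentiable with `δ⁻¹`-Lipschitz derivative, convex, and `δ⁻¹`-concave). -/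
theorem statement4 (g : ℝ → EReal) (δ : ℝ) (hδ : 0 < δ)
    (hproper : EProper g) (hlsc : LowerSemicontinuous g)
    (hδconv : EConvex (fun a => g a - ((δ / 2 * a ^ 2 : ℝ) : EReal))) :
    EProper (econj g) ∧
    LowerSemicontinuous (econj g) ∧
    EConvex (econj g) ∧
    (∀ b : ℝ, econj g b ≠ ⊤) ∧
    Differentiable ℝ (fun b => (econj g b).toReal) ∧
    LipschitzWith (Real.toNNReal δ⁻¹) (deriv fun b => (econj g b).toReal) ∧
    ConvexOn ℝ Set.univ (fun b => (econj g b).toReal) ∧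
    ConcaveOn ℝ Set.univ (fun b => (econj g b).toReal - δ⁻¹ / 2 * b ^ 2) := by
  obtain ⟨⟨a₀, ha₀top⟩, hgbot⟩ := hproper
  set h : ℝ → EReal := fun a => g a - ((δ / 2 * a ^ 2 : ℝ) : EReal) with hh
  have hdef : ∀ a, h a = g a - ((δ / 2 * a ^ 2 : ℝ) : EReal) := fun _ => rfl
  -- basic structure facts
  have hfin : ∀ (a c : ℝ), g a = (c : EReal) → h a = ((c - δ / 2 * a ^ 2 : ℝ) : EReal) := by
    intro a c hga
    rw [hdef, hga, ← EReal.coe_sub]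
  have htop : ∀ a, g a = ⊤ → h a = ⊤ := by
    intro a hga
    rw [hdef, hga, EReal.top_sub_coe]
  have hbot' : ∀ a, h a ≠ ⊥ := by
    intro a
    rcases ereal_cases (g a) (hgbot a) with hga | ⟨c, hga⟩
    · rw [htop a hga]; exact (by simp : (⊤ : EReal) ≠ ⊥)
    · rw [hfin a c hga]; exact EReal.coe_ne_bot _
  have hgh : ∀ (a r : ℝ), h a = (r : EReal) → g a = ((r + δ / 2 * a ^ 2 : ℝ) : EReal) := by
    intro a r hr
    rcases ereal_cases (g a) (hgbot a) with hga | ⟨c, hga⟩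
    · rw [htop a hga] at hr; exact absurd hr.symm (EReal.coe_ne_top r)
    · rw [hfin a c hga] at hr
      have : c - δ / 2 * a ^ 2 = r := by exact_mod_cast hr
      rw [hga]
      norm_cast
      linarith
  obtain ⟨c₀, hc₀⟩ : ∃ c : ℝ, g a₀ = (c : EReal) :=
    (ereal_cases (g a₀) (hgbot a₀)).resolve_left ha₀top
  -- the cone lower bound on h
  obtain ⟨m, cl, C, hC0, hL⟩ :
      ∃ m cl C : ℝ, 0 ≤ C ∧ ∀ a r : ℝ, h a = (r : EReal) → cl - C * |a - m| ≤ r := by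
    by_cases hcase : ∀ a, a ≠ a₀ → h a = ⊤
    · refine ⟨a₀, c₀ - δ / 2 * a₀ ^ 2, 0, le_refl 0, ?_⟩
      intro a r har
      rcases eq_or_ne a a₀ with rfl | hne
      · have := hfin a c₀ hc₀
        rw [this] at har
        have : c₀ - δ / 2 * a ^ 2 = r := by exact_mod_cast har
        simp [this]
      · rw [hcase a hne] at har
        exact absurd har.symm (EReal.coe_ne_top r)
    · push_neg at hcase
      obtain ⟨a₁, hne, ha₁⟩ := hcase
      obtain ⟨r₁, hr₁⟩ : ∃ r : ℝ, h a₁ = (r : EReal) :=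
        (ereal_cases (h a₁) (hbot' a₁)).resolve_left ha₁
      have hr₀ := hfin a₀ c₀ hc₀
      rcases hne.lt_or_gt with hlt | hlt
      · obtain ⟨m, cl, C, hC, hB⟩ := twoPointBound hδconv hbot' hlt hr₁ hr₀
        exact ⟨m, cl, C, hC, hB⟩
      · obtain ⟨m, cl, C, hC, hB⟩ := twoPointBound hδconv hbot' hlt hr₀ hr₁
        exact ⟨m, cl, C, hC, hB⟩
  -- upper bound for the conjugate
  have hKb : ∀ b : ℝ,
      econj g b ≤ (((|b| + C) ^ 2 / (2 * δ) + C * |m| - cl : ℝ) : EReal) := by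
    intro b
    refine iSup_le fun a => ?_
    rcases ereal_cases (g a) (hgbot a) with hga | ⟨c, hga⟩
    · rw [hga, EReal.sub_top]; exact bot_le
    · have hlow := hL a (c - δ / 2 * a ^ 2) (hfin a c hga)
      rw [hga, ← EReal.coe_sub, EReal.coe_le_coe_iff]
      have h1 : a * b ≤ |a| * |b| := by
        calc a * b ≤ |a * b| := le_abs_self _
          _ = |a| * |b| := abs_mul a b
      have h2 : |a - m| ≤ |a| + |m| := by
        calc |a - m| = |a + -m| := by rw [sub_eq_add_neg]
          _ ≤ |a| + |-m| := abs_add_le a (-m)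
          _ = |a| + |m| := by rw [abs_neg]
      have h3 : C * |a - m| ≤ C * (|a| + |m|) := mul_le_mul_of_nonneg_left h2 hC0
      have hq : |a| * |b| + C * |a| ≤ (|b| + C) ^ 2 / (2 * δ) + δ / 2 * a ^ 2 := by
        rw [← sq_abs a, ← sub_nonneg]
        have e : (|b| + C) ^ 2 / (2 * δ) + δ / 2 * |a| ^ 2 - (|a| * |b| + C * |a|)
            = (δ * |a| - (|b| + C)) ^ 2 / (2 * δ) := by
          have hδ' : δ ≠ 0 := ne_of_gt hδ
          field_simp
          ring
        rw [e]
        positivity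
      linarith
  have hlb : ∀ b : ℝ, ((a₀ * b - c₀ : ℝ) : EReal) ≤ econj g b := by
    intro b
    have he : ((a₀ * b : ℝ) : EReal) - g a₀ = ((a₀ * b - c₀ : ℝ) : EReal) := by
      rw [hc₀, ← EReal.coe_sub]
    calc ((a₀ * b - c₀ : ℝ) : EReal) = ((a₀ * b : ℝ) : EReal) - g a₀ := he.symm
      _ ≤ econj g b := le_iSup (fun a => ((a * b : ℝ) : EReal) - g a) a₀
  have hfinconj : ∀ b : ℝ, econj g b ≠ ⊤ ∧ econj g b ≠ ⊥ := by
    intro b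
    constructor
    · exact ne_top_of_le_ne_top (EReal.coe_ne_top _) (hKb b)
    · exact ((EReal.bot_lt_coe _).trans_le (hlb b)).ne'
  set f : ℝ → ℝ := fun b => (econj g b).toReal with hf
  have hfe : ∀ b, econj g b = ((f b : ℝ) : EReal) :=
    fun b => (EReal.coe_toReal (hfinconj b).1 (hfinconj b).2).symm
  -- lower semicontinuity
  have hlsc' : LowerSemicontinuous (econj g) := by
    show LowerSemicontinuous fun b : ℝ => ⨆ a : ℝ, ((a * b : ℝ) : EReal) - g a
    refine lowerSemicontinuous_iSup fun a => ?_
    rcases ereal_cases (g a) (hgbot a) with hga | ⟨c, hga⟩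
    · simp only [hga, EReal.sub_top]
      exact lowerSemicontinuous_const
    · have : (fun b : ℝ => ((a * b : ℝ) : EReal) - g a)
          = fun b : ℝ => ((a * b - c : ℝ) : EReal) := by
        funext b
        rw [hga, ← EReal.coe_sub]
      rw [this]
      exact (continuous_coe_real_ereal.comp
        ((continuous_const.mul continuous_id).sub continuous_const)).lowerSemicontinuous
  -- real convexity
  have hcvxf : ConvexOn ℝ Set.univ f := by
    refine ⟨convex_univ, ?_⟩
    intro x _ y _ t s ht hs hts
    simp only [smul_eq_mul]
    have key : econj g (t * x + s * y) ≤ ((t * f x + s * f y : ℝ) : EReal) := by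
      refine iSup_le fun w => ?_
      rcases ereal_cases (g w) (hgbot w) with hgw | ⟨c, hgw⟩
      · rw [hgw, EReal.sub_top]; exact bot_le
      · rw [hgw, ← EReal.coe_sub, EReal.coe_le_coe_iff]
        have hx : w * x - c ≤ f x := by
          have h' : ((w * x - c : ℝ) : EReal) ≤ econj g x := by
            calc ((w * x - c : ℝ) : EReal) = ((w * x : ℝ) : EReal) - g w := by
                  rw [hgw, ← EReal.coe_sub]
              _ ≤ econj g x := le_iSup (fun a => ((a * x : ℝ) : EReal) - g a) w
          rw [hfe x] at h'
          exact_mod_cast h'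
        have hy : w * y - c ≤ f y := by
          have h' : ((w * y - c : ℝ) : EReal) ≤ econj g y := by
            calc ((w * y - c : ℝ) : EReal) = ((w * y : ℝ) : EReal) - g w := by
                  rw [hgw, ← EReal.coe_sub]
              _ ≤ econj g y := le_iSup (fun a => ((a * y : ℝ) : EReal) - g a) w
          rw [hfe y] at h'
          exact_mod_cast h'
        calc w * (t * x + s * y) - c = t * (w * x - c) + s * (w * y - c) := by
              linear_combination c * hts
          _ ≤ t * f x + s * f y :=
              add_le_add (mul_le_mul_of_nonneg_left hx ht) (mul_le_mul_of_nonneg_left hy hs)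
    rw [hfe] at key
    exact_mod_cast key
  -- EConvex of the conjugate
  have hec : EConvex (econj g) := by
    intro x y t ht0 ht1
    rw [hfe, hfe, hfe, ← EReal.coe_mul, ← EReal.coe_mul, ← EReal.coe_add,
      EReal.coe_le_coe_iff]
    have := hcvxf.2 (Set.mem_univ x) (Set.mem_univ y) ht0 (by linarith : (0:ℝ) ≤ 1 - t)
      (by ring : t + (1 - t) = 1)
    simpa using this
  -- ε-maximizers
  have hmax : ∀ x ε : ℝ, 0 < ε → ∃ a c : ℝ, g a = (c : EReal) ∧ f x - ε < a * x - c := by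
    intro x ε hε
    have hlt : ((f x - ε : ℝ) : EReal) < econj g x := by
      rw [hfe x]
      exact_mod_cast sub_lt_self (f x) hε
    rw [show econj g x = ⨆ a : ℝ, ((a * x : ℝ) : EReal) - g a from rfl, lt_iSup_iff] at hlt
    obtain ⟨a, ha⟩ := hlt
    rcases ereal_cases (g a) (hgbot a) with hga | ⟨c, hga⟩
    · rw [hga, EReal.sub_top] at ha
      exact absurd ha (by simp)
    · rw [hga, ← EReal.coe_sub, EReal.coe_lt_coe_iff] at ha
      exact ⟨a, c, hga, ha⟩
  -- semiconcavity
  have hconc : ConcaveOn ℝ Set.univ (fun b => f b - δ⁻¹ / 2 * b ^ 2) := by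
    refine ⟨convex_univ, ?_⟩
    intro x _ y _ t s ht hs hts
    obtain rfl : s = 1 - t := by linarith
    simp only [smul_eq_mul]
    refine le_of_forall_pos_le_add fun ε hε => ?_
    obtain ⟨ax, cx, hgax, haxx⟩ := hmax x ε hε
    obtain ⟨ay, cy, hgay, hayy⟩ := hmax y ε hε
    have hhx := hfin ax cx hgax
    have hhy := hfin ay cy hgay
    have hcomb := hδconv ax ay t ht (by linarith)
    rw [hhx, hhy, ← EReal.coe_mul, ← EReal.coe_mul, ← EReal.coe_add] at hcomb
    obtain ⟨r, hr⟩ : ∃ r : ℝ, h (t * ax + (1 - t) * ay) = (r : EReal) :=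
      (ereal_cases _ (hbot' _)).resolve_left
        (fun htop' => by
          rw [htop'] at hcomb
          exact absurd hcomb (not_le.mpr (EReal.coe_lt_top _)))
    have hrle : r ≤ t * (cx - δ / 2 * ax ^ 2) + (1 - t) * (cy - δ / 2 * ay ^ 2) := by
      rw [hr] at hcomb
      exact_mod_cast hcomb
    have hgA := hgh _ r hr
    have hfz : (t * ax + (1 - t) * ay) * (t * x + (1 - t) * y)
        - (r + δ / 2 * (t * ax + (1 - t) * ay) ^ 2) ≤ f (t * x + (1 - t) * y) := by
      have h' : (((t * ax + (1 - t) * ay) * (t * x + (1 - t) * y)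
          - (r + δ / 2 * (t * ax + (1 - t) * ay) ^ 2) : ℝ) : EReal)
          ≤ econj g (t * x + (1 - t) * y) := by
        calc (((t * ax + (1 - t) * ay) * (t * x + (1 - t) * y)
              - (r + δ / 2 * (t * ax + (1 - t) * ay) ^ 2) : ℝ) : EReal)
            = (((t * ax + (1 - t) * ay) * (t * x + (1 - t) * y) : ℝ) : EReal)
              - g (t * ax + (1 - t) * ay) := by
              rw [hgA, ← EReal.coe_sub]
          _ ≤ econj g (t * x + (1 - t) * y) :=
              le_iSup (fun a => ((a * (t * x + (1 - t) * y) : ℝ) : EReal) - g a) _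
      rw [hfe] at h'
      exact_mod_cast h'
    -- quadratic inequality
    have hQ : t * (ax * x) + (1 - t) * (ay * y)
        - δ / 2 * (t * ax ^ 2 + (1 - t) * ay ^ 2)
        - δ⁻¹ / 2 * (t * x ^ 2 + (1 - t) * y ^ 2)
        ≤ (t * ax + (1 - t) * ay) * (t * x + (1 - t) * y)
          - δ / 2 * (t * ax + (1 - t) * ay) ^ 2
          - δ⁻¹ / 2 * (t * x + (1 - t) * y) ^ 2 := by
      rw [← sub_nonneg]
      have e : (t * ax + (1 - t) * ay) * (t * x + (1 - t) * y)
          - δ / 2 * (t * ax + (1 - t) * ay) ^ 2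
          - δ⁻¹ / 2 * (t * x + (1 - t) * y) ^ 2
          - (t * (ax * x) + (1 - t) * (ay * y)
            - δ / 2 * (t * ax ^ 2 + (1 - t) * ay ^ 2)
            - δ⁻¹ / 2 * (t * x ^ 2 + (1 - t) * y ^ 2))
          = t * (1 - t) / (2 * δ) * (δ * (ax - ay) - (x - y)) ^ 2 := by
        have hδ' : δ ≠ 0 := ne_of_gt hδ
        field_simp
        ring
      rw [e]
      have h1 : 0 ≤ t * (1 - t) := mul_nonneg ht hs
      have h2 : 0 ≤ (δ * (ax - ay) - (x - y)) ^ 2 := sq_nonneg _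
      have h3 : 0 < 2 * δ := by linarith
      positivity
    have P1 : t * f x ≤ t * (ax * x - cx + ε) :=
      mul_le_mul_of_nonneg_left (by linarith) ht
    have P2 : (1 - t) * f y ≤ (1 - t) * (ay * y - cy + ε) :=
      mul_le_mul_of_nonneg_left (by linarith) hs
    nlinarith [hfz, hrle, hQ, P1, P2]
  -- assemble W^{2,∞} data
  have huconv : ConvexOn ℝ Set.univ (fun b => δ⁻¹ / 2 * b ^ 2 - f b) := by
    have hneg := hconc.neg
    have he : (-(fun b : ℝ => f b - δ⁻¹ / 2 * b ^ 2)) = fun b : ℝ => δ⁻¹ / 2 * b ^ 2 - f b := by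
      funext b
      show -(f b - δ⁻¹ / 2 * b ^ 2) = δ⁻¹ / 2 * b ^ 2 - f b
      ring
    rwa [he] at hneg
  obtain ⟨D, hD1, hD2⟩ := exists_deriv_lipschitz f δ hδ hcvxf huconv
  have hderiv : (deriv fun b => (econj g b).toReal) = D := funext fun x => (hD1 x).deriv
  refine ⟨⟨⟨0, (hfinconj 0).1⟩, fun b => (hfinconj b).2⟩, hlsc', hec,
    fun b => (hfinconj b).1, fun x => (hD1 x).differentiableAt, ?_, hcvxf, hconc⟩
  rw [hderiv]
  exact hD2
end
end
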